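/- The complement of a hypersphere in S^l (l ≥ 2) has exactly two connected components, each homeomorphic to an open l-ball. -/

import Mathlib

open Set Metric Module
open scoped RealInnerProductSpace

noncomputable section

variable {E : Type*} [NormedAddCommGroup E] [InnerProductSpace ℝ E]

/-- Pythagoras for the orthogonal projection. -/
lemma proj_norm_sq {v : E} (hv : ‖v‖ = 1) {x : E} (hx : ‖x‖ = 1) :
    ‖(((ℝ ∙ v)ᗮ.orthogonalProjectionOnto x : E))‖ ^ 2 = 1 - ⟪v, x⟫ ^ 2 := by
  have split : x = ⟪v, x⟫ • v + (((ℝ ∙ v)ᗮ.orthogonalProjectionOnto x : E)) := by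
    conv_lhs => rw [← Submodule.starProjection_add_starProjection_orthogonal (K := ℝ ∙ v) x]
    rw [Submodule.starProjection_unit_singleton (𝕜 := ℝ) hv x]; rfl
  have hmem := ((ℝ ∙ v)ᗮ.orthogonalProjectionOnto x).2
  have hvp : ⟪v, (((ℝ ∙ v)ᗮ.orthogonalProjectionOnto x : E))⟫ = 0 :=
    Submodule.mem_orthogonal_singleton_iff_inner_right.mp hmem
  have horth : ⟪⟪v, x⟫ • v, (((ℝ ∙ v)ᗮ.orthogonalProjectionOnto x : E))⟫ = 0 := by
    rw [real_inner_smul_left, hvp, mul_zero]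
  have hpy := norm_add_sq_eq_norm_sq_add_norm_sq_of_inner_eq_zero _ _ horth
  rw [← split, hx] at hpy
  have hsv : ‖⟪v, x⟫ • v‖ ^ 2 = ⟪v, x⟫ ^ 2 := by
    rw [norm_smul, hv, mul_one, Real.norm_eq_abs, sq_abs]
  nlinarith [hpy, hsv]

/-- Norm of the stereographic projection (centred at `v`), squared, times `(1-⟪v,x⟫)²`. -/
lemma stereo_norm_sq {v : E} (hv : ‖v‖ = 1) {x : E} (hx : ‖x‖ = 1) :
    ‖(stereoToFun v x : E)‖ ^ 2 * (1 - ⟪v, x⟫) ^ 2 = 4 * (1 - ⟪v, x⟫ ^ 2) := by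
  have hP := proj_norm_sq hv hx
  have : ‖(stereoToFun v x : E)‖ = |2 / (1 - ⟪v, x⟫)| * ‖(((ℝ ∙ v)ᗮ.orthogonalProjectionOnto x : E))‖ := by
    rw [stereoToFun_apply]
    push_cast
    rw [norm_smul, Real.norm_eq_abs]
    rfl
  rcases eq_or_ne (⟪v, x⟫) 1 with h1 | h1
  · rw [h1]
    have : ‖(((ℝ ∙ v)ᗮ.orthogonalProjectionOnto x : E))‖ ^ 2 = 0 := by rw [hP, h1]; ring
    nlinarith [this]
  · have hne : (1 : ℝ) - ⟪v, x⟫ ≠ 0 := sub_ne_zero.mpr (Ne.symm h1)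
    rw [this, mul_pow, sq_abs, div_pow, hP]
    field_simp
    ring

section Cap

variable (l : ℕ)

local notation "E'" => EuclideanSpace ℝ (Fin (l + 1))

lemma cap_homeo (u : E') (hu : ‖u‖ = 1) (t : ℝ) (ht : -1 < t) (ht1 : t < 1) :
    Nonempty ({x ∈ Metric.sphere (0 : E') 1 | t < ⟪u, x⟫} ≃ₜ
      Metric.ball (0 : EuclideanSpace ℝ (Fin l)) 1) := by
  haveI : Fact (finrank ℝ E' = l + 1) := ⟨finrank_euclideanSpace_fin⟩
  set v : Metric.sphere (0 : E') 1 := ⟨-u, by simp [hu]⟩ with hv_def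
  have hvE : (v : E') = -u := rfl
  set H := stereographic' l v with hH_def
  set r : ℝ := 2 * Real.sqrt ((1 - t) / (1 + t)) with hr_def
  have h1t : (0 : ℝ) < 1 + t := by linarith
  have h1t' : (0 : ℝ) < 1 - t := by linarith
  have hr_pos : 0 < r := by
    apply mul_pos (by norm_num)
    exact Real.sqrt_pos.mpr (div_pos h1t' h1t)
  have hr_sq : r ^ 2 * (1 + t) = 4 * (1 - t) := by
    have : r ^ 2 = 4 * ((1 - t) / (1 + t)) := by
      rw [hr_def, mul_pow, Real.sq_sqrt (le_of_lt (div_pos h1t' h1t))]; ring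
    rw [this]; field_simp
  -- the norm of the projection
  have hHnorm : ∀ x : Metric.sphere (0 : E') 1,
      ‖H x‖ = ‖stereoToFun (v : E') (x : E')‖ := by
    intro x
    rw [hH_def, stereographic']
    rw [OpenPartialHomeomorph.coe_trans]
    simp only [Function.comp_apply, Homeomorph.toOpenPartialHomeomorph_apply,
      LinearIsometryEquiv.coe_toHomeomorph, LinearIsometryEquiv.norm_map]
    rfl
  clear_value v H r
  -- the key equivalence
  have key : ∀ x : Metric.sphere (0 : E') 1, (x : E') ≠ -u → (t < ⟪u, (x : E')⟫ ↔ ‖H x‖ < r) := by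
    intro x hx
    have hxn : ‖(x : E')‖ = 1 := norm_eq_of_mem_sphere x
    have hs := stereo_norm_sq (v := (v : E')) (norm_eq_of_mem_sphere v) hxn
    rw [hvE] at hs
    have hinner : ⟪-u, (x : E')⟫ = -⟪u, (x : E')⟫ := inner_neg_left _ _
    set s : ℝ := ⟪u, (x : E')⟫ with hs_def
    rw [hinner] at hs
    have hs_le : |s| ≤ 1 := by
      have := abs_real_inner_le_norm u (x : E')
      rwa [hu, hxn, one_mul] at this
    have hs_ge : -1 ≤ s := neg_le_of_abs_le hs_le
    have hs_ne : s ≠ -1 := by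
      intro h
      apply hx
      have : ⟪-u, (x : E')⟫ = 1 := by rw [hinner, h]; ring
      have h2 : -u = (x : E') := by
        have hnu : ‖-u‖ = 1 := by simp [hu]
        exact (inner_eq_one_iff_of_norm_eq_one (𝕜 := ℝ) hnu hxn).mp this
      exact h2.symm
    have hs_gt : -1 < s := lt_of_le_of_ne hs_ge (Ne.symm hs_ne)
    have hNn : 0 ≤ ‖H x‖ := norm_nonneg _
    have hs2 : ‖H x‖ ^ 2 * (1 + s) ^ 2 = 4 * (1 - s ^ 2) := by
      rw [hHnorm x]
      calc ‖stereoToFun (v : E') (x : E')‖ ^ 2 * (1 + s) ^ 2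
          = ‖stereoToFun (v : E') (x : E')‖ ^ 2 * (1 - -s) ^ 2 := by ring_nf
        _ = 4 * (1 - (-s) ^ 2) := by rw [hvE]; exact hs
        _ = 4 * (1 - s ^ 2) := by ring
    clear_value s
    generalize hN : ‖H x‖ = N at hs2 hNn ⊢
    clear hs hHnorm hinner hs_le hs_ne hxn hx
    have hps : (0 : ℝ) < 1 + s := by linarith
    have hA : N ^ 2 * (1 + s) = 4 * (1 - s) := by
      have h4 : N ^ 2 * (1 + s) * (1 + s) = 4 * (1 - s) * (1 + s) := by
        linear_combination hs2
      exact mul_right_cancel₀ (ne_of_gt hps) h4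
    have e1 : N ^ 2 * (1 + s) * (1 + t) = 4 * (1 - s) * (1 + t) := by
      linear_combination (1 + t) * hA
    have e2 : r ^ 2 * (1 + t) * (1 + s) = 4 * (1 - t) * (1 + s) := by
      linear_combination (1 + s) * hr_sq
    constructor
    · intro hts
      by_contra hcon
      push_neg at hcon
      have h2 : r ^ 2 ≤ N ^ 2 := by nlinarith [hr_pos]
      have h3 := mul_le_mul_of_nonneg_right (mul_le_mul_of_nonneg_right h2 h1t.le) hps.le
      nlinarith [e1, e2, h3]
    · intro hlt
      have h2 : N ^ 2 < r ^ 2 := by nlinarith [hr_pos, hNn]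
      have h3 := mul_lt_mul_of_pos_right (mul_lt_mul_of_pos_right h2 h1t) hps
      nlinarith [e1, e2, h3]
  have hsource : H.source = {v}ᶜ := by rw [hH_def]; exact stereographic'_source v
  have htarget : H.target = Set.univ := by rw [hH_def]; exact stereographic'_target v
  have hcoe_ne : ∀ x : Metric.sphere (0 : E') 1, t < ⟪u, (x : E')⟫ → (x : E') ≠ -u := by
    intro x hx h
    rw [h] at hx
    have : ⟪u, -u⟫ = -1 := by
      rw [inner_neg_right, real_inner_self_eq_norm_sq, hu]; norm_num
    rw [this] at hx; linarith
  have hmem_source : ∀ x : Metric.sphere (0 : E') 1, (x : E') ≠ -u → x ∈ H.source := by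
    intro x hx
    rw [hsource]
    intro h
    exact hx (by rw [Set.mem_singleton_iff.mp h]; exact hvE)
  -- continuity of H.symm
  have hcs : Continuous H.symm := by
    have h1 := H.continuousOn_symm
    rw [htarget] at h1
    exact continuousOn_univ.mp h1
  -- the forward map
  set C : Set E' := {x ∈ Metric.sphere (0 : E') 1 | t < ⟪u, x⟫} with hC_def
  have hCsph : ∀ x : C, ((x : E') ∈ Metric.sphere (0 : E') 1) := fun x => x.2.1
  let sx : C → Metric.sphere (0 : E') 1 := fun x => ⟨(x : E'), hCsph x⟩
  have hsx_ne : ∀ x : C, ((sx x : E') ≠ -u) := fun x => hcoe_ne (sx x) x.2.2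
  have hFmem : ∀ x : C, r⁻¹ • H (sx x) ∈ Metric.ball (0 : EuclideanSpace ℝ (Fin l)) 1 := by
    intro x
    rw [mem_ball_zero_iff, norm_smul, Real.norm_eq_abs, abs_of_pos (inv_pos.mpr hr_pos)]
    have hlt : ‖H (sx x)‖ < r := (key (sx x) (hsx_ne x)).mp x.2.2
    rw [inv_mul_lt_iff₀ hr_pos, mul_one]
    exact hlt
  have hGmem : ∀ y : Metric.ball (0 : EuclideanSpace ℝ (Fin l)) 1,
      ((H.symm (r • (y : EuclideanSpace ℝ (Fin l))) : E') ∈ C) := by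
    intro y
    set z := H.symm (r • (y : EuclideanSpace ℝ (Fin l))) with hz_def
    have hzt : r • (y : EuclideanSpace ℝ (Fin l)) ∈ H.target := by rw [htarget]; trivial
    have hz_src : z ∈ H.source := H.map_target hzt
    have hz_ne : (z : E') ≠ -u := by
      rw [hsource] at hz_src
      intro h
      exact hz_src (Set.mem_singleton_iff.mpr (Subtype.ext (h.trans hvE.symm)))
    have hHz : H z = r • (y : EuclideanSpace ℝ (Fin l)) := H.right_inv hzt
    have hylt : ‖(y : EuclideanSpace ℝ (Fin l))‖ < 1 := mem_ball_zero_iff.mp y.2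
    have hnorm : ‖H z‖ < r := by
      rw [hHz, norm_smul, Real.norm_eq_abs, abs_of_pos hr_pos]
      nlinarith [hr_pos]
    exact ⟨z.2, (key z hz_ne).mpr hnorm⟩
  refine ⟨Homeomorph.mk ⟨fun x => ⟨r⁻¹ • H (sx x), hFmem x⟩,
      fun y => ⟨(H.symm (r • (y : EuclideanSpace ℝ (Fin l))) : E'), hGmem y⟩, ?_, ?_⟩ ?_ ?_⟩
  · -- left inverse
    intro x
    apply Subtype.ext
    show ((H.symm (r • (r⁻¹ • H (sx x)))) : E') = (x : E')
    rw [smul_inv_smul₀ (ne_of_gt hr_pos)]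
    have : H.symm (H (sx x)) = sx x := H.left_inv (hmem_source (sx x) (hsx_ne x))
    rw [this]
  · -- right inverse
    intro y
    apply Subtype.ext
    show r⁻¹ • H (H.symm (r • (y : EuclideanSpace ℝ (Fin l)))) = (y : EuclideanSpace ℝ (Fin l))
    have hzt : r • (y : EuclideanSpace ℝ (Fin l)) ∈ H.target := by rw [htarget]; trivial
    rw [H.right_inv hzt, inv_smul_smul₀ (ne_of_gt hr_pos)]
  · -- continuity forward
    apply Continuous.subtype_mk
    refine Continuous.const_smul (g := fun x => H (sx x)) ?_ r⁻¹
    refine H.continuousOn.comp_continuous ?_ (fun x => hmem_source (sx x) (hsx_ne x))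
    exact Continuous.subtype_mk continuous_subtype_val _
  · -- continuity backward
    apply Continuous.subtype_mk
    exact continuous_subtype_val.comp (hcs.comp (continuous_subtype_val.const_smul r))

end Cap

/-- A preconnected clopen-in-`s` piece is the connected component of its points. -/
lemma comp_eq_of_clopen {X : Type*} [TopologicalSpace X] {s F O O' : Set X}
    (hO : IsOpen O) (hO' : IsOpen O') (hF : F = s ∩ O) (hC : s \ F = s ∩ O')
    (hFc : IsPreconnected F) {x : X} (hx : x ∈ F) :
    connectedComponentIn s x = F := by
  have hFs : F ⊆ s := hF ▸ Set.inter_subset_left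
  apply subset_antisymm
  · intro y hyT
    by_contra hyF
    set T := connectedComponentIn s x with hT_def
    have hT : IsPreconnected T := isPreconnected_connectedComponentIn
    have hTs : T ⊆ s := connectedComponentIn_subset s x
    have hxT : x ∈ T := mem_connectedComponentIn (hFs hx)
    have hyO' : y ∈ O' := by
      have : y ∈ s \ F := ⟨hTs hyT, hyF⟩
      rw [hC] at this; exact this.2
    have hcover : T ⊆ O ∪ O' := by
      intro z hz
      rcases Classical.em (z ∈ F) with h | h
      · exact Or.inl ((hF ▸ h).2)
      · have : z ∈ s ∩ O' := hC ▸ (⟨hTs hz, h⟩ : z ∈ s \ F)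
        exact Or.inr this.2
    obtain ⟨z, hzT, hzO, hzO'⟩ := hT O O' hO hO' hcover ⟨x, hxT, (hF ▸ hx).2⟩ ⟨y, hyT, hyO'⟩
    have hzF : z ∈ F := hF ▸ ⟨hTs hzT, hzO⟩
    have hzC : z ∈ s \ F := by rw [hC]; exact ⟨hTs hzT, hzO'⟩
    exact hzC.2 hzF
  · exact hFc.subset_connectedComponentIn hx hFs

lemma preconn_of_homeo {X Y : Type*} [TopologicalSpace X] [TopologicalSpace Y]
    {A : Set X} {B : Set Y} (hB : IsPreconnected B) (e : ↥A ≃ₜ ↥B) : IsPreconnected A := by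
  haveI := isPreconnected_iff_preconnectedSpace.mp hB
  rw [isPreconnected_iff_preconnectedSpace]
  refine ⟨?_⟩
  have h := (isPreconnected_univ (α := ↥B)).image e.symm e.symm.continuous.continuousOn
  rwa [Set.image_univ, e.symm.surjective.range_eq] at h

/-- The complement in `S^l` (`l ≥ 2`) of a hypersphere
(a nonempty, non-singleton intersection of `S^l` with an affine hyperplane)
has exactly two connected components, each homeomorphic to the open unit ball in `ℝ^l`. -/
theorem stmt8 (l : ℕ) (hl : 2 ≤ l)
    (f : EuclideanSpace ℝ (Fin (l + 1)) →L[ℝ] ℝ) (c : ℝ) (hf : f ≠ 0)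
    (Sl : Set (EuclideanSpace ℝ (Fin (l + 1)))) (hSl : Sl = Metric.sphere 0 1)
    (S : Set (EuclideanSpace ℝ (Fin (l + 1)))) (hS : S = {x ∈ Sl | f x = c})
    (hne : S.Nontrivial) :
    ∃ U V : Set (EuclideanSpace ℝ (Fin (l + 1))),
      U ≠ V ∧
      (∀ x ∈ Sl \ S, connectedComponentIn (Sl \ S) x = U ∨
        connectedComponentIn (Sl \ S) x = V) ∧
      (∃ x ∈ Sl \ S, connectedComponentIn (Sl \ S) x = U) ∧
      (∃ x ∈ Sl \ S, connectedComponentIn (Sl \ S) x = V) ∧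
      Nonempty (U ≃ₜ Metric.ball (0 : EuclideanSpace ℝ (Fin l)) 1) ∧
      Nonempty (V ≃ₜ Metric.ball (0 : EuclideanSpace ℝ (Fin l)) 1) := by
  classical
  set y : EuclideanSpace ℝ (Fin (l + 1)) := (InnerProductSpace.toDual ℝ _).symm f with hy_def
  have hfy : ∀ x, ⟪y, x⟫ = f x := fun x => InnerProductSpace.toDual_symm_apply
  have hy0 : y ≠ 0 := by
    intro h
    apply hf
    have h2 : f = InnerProductSpace.toDual ℝ _ y :=
      ((InnerProductSpace.toDual ℝ _).apply_symm_apply f).symm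
    rw [h2, h, map_zero]
  have hyn : 0 < ‖y‖ := norm_pos_iff.mpr hy0
  set u := ‖y‖⁻¹ • y with hu_def
  have hu : ‖u‖ = 1 := norm_smul_inv_norm hy0
  have hfu : ∀ x, f x = ‖y‖ * ⟪u, x⟫ := by
    intro x
    rw [← hfy x, hu_def, real_inner_smul_left]
    field_simp
  set t := c / ‖y‖ with ht_def
  have hiff_eq : ∀ x, (f x = c ↔ ⟪u, x⟫ = t) := by
    intro x
    rw [hfu x, ht_def, eq_div_iff (ne_of_gt hyn)]
    constructor <;> intro h <;> linarith [h]
  have hiff_lt : ∀ x, (c < f x ↔ t < ⟪u, x⟫) := fun x => by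
    rw [hfu x, ht_def, div_lt_iff₀ hyn, mul_comm]
  have hiff_gt : ∀ x, (f x < c ↔ ⟪u, x⟫ < t) := fun x => by
    rw [hfu x, ht_def, lt_div_iff₀ hyn, mul_comm]
  -- bounds on t
  obtain ⟨x₁, hx₁, x₂, hx₂, hx12⟩ := hne
  rw [hS] at hx₁ hx₂
  have hx₁n : ‖x₁‖ = 1 := by
    have := hx₁.1; rw [hSl] at this; exact mem_sphere_zero_iff_norm.mp this
  have hx₂n : ‖x₂‖ = 1 := by
    have := hx₂.1; rw [hSl] at this; exact mem_sphere_zero_iff_norm.mp this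
  have hux₁ : ⟪u, x₁⟫ = t := (hiff_eq x₁).mp hx₁.2
  have hux₂ : ⟪u, x₂⟫ = t := (hiff_eq x₂).mp hx₂.2
  have habs : |t| ≤ 1 := by
    rw [← hux₁]
    have := abs_real_inner_le_norm u x₁
    rwa [hu, hx₁n, one_mul] at this
  have ht1 : t < 1 := by
    rcases lt_or_eq_of_le (le_of_abs_le habs) with h | h
    · exact h
    · exfalso
      have h1 : u = x₁ := (inner_eq_one_iff_of_norm_eq_one (𝕜 := ℝ) hu hx₁n).mp (by rw [hux₁, h])
      have h2 : u = x₂ := (inner_eq_one_iff_of_norm_eq_one (𝕜 := ℝ) hu hx₂n).mp (by rw [hux₂, h])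
      exact hx12 (h1 ▸ h2)
  have ht : -1 < t := by
    rcases lt_or_eq_of_le (neg_le_of_abs_le habs) with h | h
    · exact h
    · exfalso
      have hnu : ‖-u‖ = 1 := by rw [norm_neg]; exact hu
      have h1 : -u = x₁ := (inner_eq_one_iff_of_norm_eq_one (𝕜 := ℝ) hnu hx₁n).mp
        (by rw [inner_neg_left, hux₁, ← h]; ring)
      have h2 : -u = x₂ := (inner_eq_one_iff_of_norm_eq_one (𝕜 := ℝ) hnu hx₂n).mp
        (by rw [inner_neg_left, hux₂, ← h]; ring)
      exact hx12 (h1 ▸ h2)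
  -- the two caps
  set U : Set (EuclideanSpace ℝ (Fin (l + 1))) := {x ∈ Sl | c < f x} with hU_def
  set V : Set (EuclideanSpace ℝ (Fin (l + 1))) := {x ∈ Sl | f x < c} with hV_def
  have hU_eq : U = {x ∈ Metric.sphere (0 : EuclideanSpace ℝ (Fin (l + 1))) 1 | t < ⟪u, x⟫} := by
    rw [hU_def, hSl]
    ext x
    simp only [Set.mem_sep_iff]
    exact and_congr_right fun _ => hiff_lt x
  have hV_eq : V = {x ∈ Metric.sphere (0 : EuclideanSpace ℝ (Fin (l + 1))) 1 | -t < ⟪-u, x⟫} := by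
    rw [hV_def, hSl]
    ext x
    simp only [Set.mem_sep_iff]
    refine and_congr_right fun _ => ?_
    rw [inner_neg_left, neg_lt_neg_iff]
    exact hiff_gt x
  have hUhomeo : Nonempty (U ≃ₜ Metric.ball (0 : EuclideanSpace ℝ (Fin l)) 1) := by
    rw [hU_eq]
    exact cap_homeo l u hu t ht ht1
  have hVhomeo : Nonempty (V ≃ₜ Metric.ball (0 : EuclideanSpace ℝ (Fin l)) 1) := by
    rw [hV_eq]
    exact cap_homeo l (-u) (by rw [norm_neg]; exact hu) (-t) (by linarith) (by linarith)
  have hball : IsPreconnected (Metric.ball (0 : EuclideanSpace ℝ (Fin l)) 1) :=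
    (convex_ball (0 : EuclideanSpace ℝ (Fin l)) 1).isPreconnected
  obtain ⟨eU⟩ := hUhomeo
  obtain ⟨eV⟩ := hVhomeo
  have hUconn : IsPreconnected U := preconn_of_homeo hball eU
  have hVconn : IsPreconnected V := preconn_of_homeo hball eV
  -- clopen decomposition
  have hO : IsOpen {z : EuclideanSpace ℝ (Fin (l + 1)) | c < f z} :=
    isOpen_lt continuous_const f.continuous
  have hO' : IsOpen {z : EuclideanSpace ℝ (Fin (l + 1)) | f z < c} :=
    isOpen_lt f.continuous continuous_const
  have hFU : U = (Sl \ S) ∩ {z | c < f z} := by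
    rw [hU_def, hS]
    ext x
    simp only [Set.mem_sep_iff, Set.mem_diff, Set.mem_inter_iff, Set.mem_setOf_eq]
    constructor
    · rintro ⟨h1, h2⟩
      exact ⟨⟨h1, fun h => (ne_of_gt h2) h.2⟩, h2⟩
    · rintro ⟨⟨h1, _⟩, h2⟩
      exact ⟨h1, h2⟩
  have hFV : V = (Sl \ S) ∩ {z | f z < c} := by
    rw [hV_def, hS]
    ext x
    simp only [Set.mem_sep_iff, Set.mem_diff, Set.mem_inter_iff, Set.mem_setOf_eq]
    constructor
    · rintro ⟨h1, h2⟩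
      exact ⟨⟨h1, fun h => (ne_of_lt h2) h.2⟩, h2⟩
    · rintro ⟨⟨h1, _⟩, h2⟩
      exact ⟨h1, h2⟩
  have hCU : (Sl \ S) \ U = (Sl \ S) ∩ {z | f z < c} := by
    rw [hU_def, hS]
    ext x
    simp only [Set.mem_sep_iff, Set.mem_diff, Set.mem_inter_iff, Set.mem_setOf_eq]
    constructor
    · rintro ⟨⟨h1, h2⟩, h3⟩
      rcases lt_trichotomy (f x) c with h | h | h
      · exact ⟨⟨h1, h2⟩, h⟩
      · exact absurd ⟨h1, h⟩ h2
      · exact absurd ⟨h1, h⟩ h3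
    · rintro ⟨⟨h1, h2⟩, h3⟩
      exact ⟨⟨h1, h2⟩, fun h => (not_lt_of_gt h3) h.2⟩
  have hCV : (Sl \ S) \ V = (Sl \ S) ∩ {z | c < f z} := by
    rw [hV_def, hS]
    ext x
    simp only [Set.mem_sep_iff, Set.mem_diff, Set.mem_inter_iff, Set.mem_setOf_eq]
    constructor
    · rintro ⟨⟨h1, h2⟩, h3⟩
      rcases lt_trichotomy (f x) c with h | h | h
      · exact absurd ⟨h1, h⟩ h3
      · exact absurd ⟨h1, h⟩ h2
      · exact ⟨⟨h1, h2⟩, h⟩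
    · rintro ⟨⟨h1, h2⟩, h3⟩
      exact ⟨⟨h1, h2⟩, fun h => (not_lt_of_gt h3) h.2⟩
  -- membership of the two poles
  have huSl : u ∈ Sl := by rw [hSl]; exact mem_sphere_zero_iff_norm.mpr hu
  have hnuSl : -u ∈ Sl := by
    rw [hSl]; exact mem_sphere_zero_iff_norm.mpr (by rw [norm_neg]; exact hu)
  have huu : ⟪u, u⟫ = 1 := by
    rw [real_inner_self_eq_norm_sq, hu]; norm_num
  have hufu : c < f u := (hiff_lt u).mpr (by rw [huu]; exact ht1)
  have hnufnu : f (-u) < c := by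
    rw [hiff_gt (-u), inner_neg_right, huu]
    linarith
  have huU : u ∈ U := ⟨huSl, hufu⟩
  have hnuV : -u ∈ V := ⟨hnuSl, hnufnu⟩
  have huD : u ∈ Sl \ S := by
    rw [hFU] at huU; exact huU.1
  have hnuD : -u ∈ Sl \ S := by
    rw [hFV] at hnuV; exact hnuV.1
  have hcompU : ∀ x ∈ U, connectedComponentIn (Sl \ S) x = U := fun x hx =>
    comp_eq_of_clopen hO hO' hFU hCU hUconn hx
  have hcompV : ∀ x ∈ V, connectedComponentIn (Sl \ S) x = V := fun x hx =>
    comp_eq_of_clopen hO' hO hFV hCV hVconn hx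
  have hUV : U ≠ V := by
    intro h
    have := huU
    rw [h] at this
    exact (not_lt_of_gt hufu) this.2
  refine ⟨U, V, hUV, ?_, ⟨u, huD, hcompU u huU⟩, ⟨-u, hnuD, hcompV (-u) hnuV⟩, ⟨eU⟩, ⟨eV⟩⟩
  intro x hx
  have hxSl : x ∈ Sl := hx.1
  have hxS : x ∉ S := hx.2
  have hfxc : f x ≠ c := by
    intro h
    exact hxS (by rw [hS]; exact ⟨hxSl, h⟩)
  rcases lt_or_gt_of_ne hfxc with h | h
  · exact Or.inr (hcompV x ⟨hxSl, h⟩)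
  · exact Or.inl (hcompU x ⟨hxSl, h⟩)
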